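/- Let q be a nonzero real number. Then there exists a unique star structure ★ₑ on SL_q(2,ℂ) with a^{★ₑ} = d, b^{★ₑ} = −q⁻¹c, c^{★ₑ} = −qb, d^{★ₑ} = a, and it is a Hopf star structure: Δ(x^{★ₑ}) = (★ₑ ⊗ ★ₑ)(Δ(x)) for all x, where Δ is the matrix comultiplication. (This real form is the quantum group SU_q(2).) -/

import Mathlib

noncomputable section

open FreeAlgebra
open scoped TensorProduct

/-- The Manin relations with parameter `q` together with the determinant relation
`a d − q⁻¹ b c = 1`. -/
inductive SLRel (q : ℂ) : FreeAlgebra ℂ (Fin 4) → FreeAlgebra ℂ (Fin 4) → Prop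
  | ab : SLRel q (ι ℂ 0 * ι ℂ 1) (q⁻¹ • (ι ℂ 1 * ι ℂ 0))
  | ac : SLRel q (ι ℂ 0 * ι ℂ 2) (q⁻¹ • (ι ℂ 2 * ι ℂ 0))
  | bd : SLRel q (ι ℂ 1 * ι ℂ 3) (q⁻¹ • (ι ℂ 3 * ι ℂ 1))
  | cd : SLRel q (ι ℂ 2 * ι ℂ 3) (q⁻¹ • (ι ℂ 3 * ι ℂ 2))
  | bc : SLRel q (ι ℂ 1 * ι ℂ 2) (ι ℂ 2 * ι ℂ 1)
  | ad : SLRel q (ι ℂ 0 * ι ℂ 3 - ι ℂ 3 * ι ℂ 0) ((q⁻¹ - q) • (ι ℂ 1 * ι ℂ 2))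
  | det : SLRel q (ι ℂ 0 * ι ℂ 3 - q⁻¹ • (ι ℂ 1 * ι ℂ 2)) 1

/-- `SL_q(2,ℂ)`. -/
abbrev SLq (q : ℂ) := RingQuot (SLRel q)

/-- The images of the generators `a, b, c, d` in `SL_q(2,ℂ)`. -/
def gen (q : ℂ) (i : Fin 4) : SLq q := RingQuot.mkAlgHom ℂ (SLRel q) (ι ℂ i)

/-- A star structure on a complex algebra: additive, conjugate-linear,
antimultiplicative, unital, involutive. -/
def IsStar {A : Type*} [Ring A] [Algebra ℂ A] (st : A → A) : Prop :=
  (∀ x y : A, st (x + y) = st x + st y) ∧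
  (∀ (z : ℂ) (x : A), st (z • x) = (starRingEnd ℂ) z • st x) ∧
  (∀ x y : A, st (x * y) = st y * st x) ∧
  st 1 = 1 ∧
  (∀ x : A, st (st x) = x)

/-- `Δ` is the matrix comultiplication of `SL_q(2,ℂ)`. -/
def IsComul (q : ℂ) (Δ : SLq q →ₐ[ℂ] (SLq q ⊗[ℂ] SLq q)) : Prop :=
  Δ (gen q 0) = gen q 0 ⊗ₜ[ℂ] gen q 0 + gen q 1 ⊗ₜ[ℂ] gen q 2 ∧
  Δ (gen q 1) = gen q 0 ⊗ₜ[ℂ] gen q 1 + gen q 1 ⊗ₜ[ℂ] gen q 3 ∧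
  Δ (gen q 2) = gen q 2 ⊗ₜ[ℂ] gen q 0 + gen q 3 ⊗ₜ[ℂ] gen q 2 ∧
  Δ (gen q 3) = gen q 2 ⊗ₜ[ℂ] gen q 1 + gen q 3 ⊗ₜ[ℂ] gen q 3

/-- The prescribed values of the star structure on the generators. -/
def StarVals (q : ℂ) (st : SLq q → SLq q) : Prop :=
  st (gen q 0) = gen q 3 ∧ st (gen q 1) = (-q⁻¹) • gen q 2 ∧
  st (gen q 2) = (-q) • gen q 1 ∧ st (gen q 3) = gen q 0

namespace SU2Aux

open MulOpposite

variable (q : ℂ)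

/-- `SLq q` with the conjugated `ℂ`-algebra structure. -/
def Cj : Type := SLq q

instance : Ring (Cj q) := inferInstanceAs (Ring (SLq q))

instance : Algebra ℂ (Cj q) :=
  RingHom.toAlgebra' ((algebraMap ℂ (SLq q)).comp (starRingEnd ℂ))
    (fun z x => Algebra.commutes (A := SLq q) ((starRingEnd ℂ) z) x)

def unCj : Cj q ≃+* SLq q := RingEquiv.refl (SLq q)

lemma unCj_algebraMap (z : ℂ) :
    unCj q (algebraMap ℂ (Cj q) z) = algebraMap ℂ (SLq q) (starRingEnd ℂ z) := rfl

/-- values of the star on generators -/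
def vals : Fin 4 → SLq q := ![gen q 3, (-q⁻¹) • gen q 2, (-q) • gen q 1, gen q 0]

def L0 : FreeAlgebra ℂ (Fin 4) →ₐ[ℂ] Cj q :=
  FreeAlgebra.lift ℂ (fun i => (unCj q).symm (vals q i))

def G : FreeAlgebra ℂ (Fin 4) →+* (SLq q)ᵐᵒᵖ where
  toFun x := op (unCj q (L0 q (star x)))
  map_one' := by simp
  map_mul' x y := by simp [star_mul, map_mul]
  map_zero' := by simp
  map_add' x y := by simp [star_add, map_add]

lemma G_apply (x : FreeAlgebra ℂ (Fin 4)) : G q x = op (unCj q (L0 q (star x))) := rfl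

lemma G_aM (z : ℂ) :
    G q (algebraMap ℂ _ z) = op (algebraMap ℂ (SLq q) (starRingEnd ℂ z)) := by
  rw [G_apply, FreeAlgebra.star_algebraMap, AlgHom.commutes, unCj_algebraMap]

lemma op_aM_mul (w : ℂ) (u : (SLq q)ᵐᵒᵖ) :
    op (algebraMap ℂ (SLq q) w) * u = w • u := by
  rw [← op_unop u, ← op_mul, ← op_smul]
  congr 1
  rw [Algebra.smul_def, Algebra.commutes]

lemma G_smul (z : ℂ) (x : FreeAlgebra ℂ (Fin 4)) :
    G q (z • x) = (starRingEnd ℂ z) • G q x := by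
  rw [Algebra.smul_def, map_mul, G_aM, op_aM_mul]

lemma G_mul_ι (i j : Fin 4) : G q (ι ℂ i * ι ℂ j) = op (vals q j * vals q i) := by
  rw [G_apply, star_mul, FreeAlgebra.star_ι, FreeAlgebra.star_ι, map_mul, map_mul]
  simp [L0]

lemma mkq (x : FreeAlgebra ℂ (Fin 4)) :
    RingQuot.mkAlgHom ℂ (SLRel q) x = RingQuot.mkRingHom (SLRel q) x :=
  RingHom.congr_fun (RingQuot.mkAlgHom_coe ℂ (SLRel q)) x

lemma hab : gen q 0 * gen q 1 = q⁻¹ • (gen q 1 * gen q 0) := by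
  simpa [gen, map_mul, map_smul] using RingQuot.mkAlgHom_rel ℂ (SLRel.ab (q := q))
lemma hac : gen q 0 * gen q 2 = q⁻¹ • (gen q 2 * gen q 0) := by
  simpa [gen, map_mul, map_smul] using RingQuot.mkAlgHom_rel ℂ (SLRel.ac (q := q))
lemma hbd : gen q 1 * gen q 3 = q⁻¹ • (gen q 3 * gen q 1) := by
  simpa [gen, map_mul, map_smul] using RingQuot.mkAlgHom_rel ℂ (SLRel.bd (q := q))
lemma hcd : gen q 2 * gen q 3 = q⁻¹ • (gen q 3 * gen q 2) := by
  simpa [gen, map_mul, map_smul] using RingQuot.mkAlgHom_rel ℂ (SLRel.cd (q := q))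
lemma hbc : gen q 1 * gen q 2 = gen q 2 * gen q 1 := by
  simpa [gen, map_mul] using RingQuot.mkAlgHom_rel ℂ (SLRel.bc (q := q))
lemma had : gen q 0 * gen q 3 - gen q 3 * gen q 0 = (q⁻¹ - q) • (gen q 1 * gen q 2) := by
  simpa [gen, map_mul, map_smul, map_sub] using RingQuot.mkAlgHom_rel ℂ (SLRel.ad (q := q))
lemma hdet : gen q 0 * gen q 3 - q⁻¹ • (gen q 1 * gen q 2) = 1 := by
  simpa [gen, map_mul, map_smul, map_sub] using RingQuot.mkAlgHom_rel ℂ (SLRel.det (q := q))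

lemma G_rel (h0 : q ≠ 0) (hs : starRingEnd ℂ q = q) :
    ∀ ⦃x y⦄, SLRel q x y → G q x = G q y := by
  have hsi : starRingEnd ℂ q⁻¹ = q⁻¹ := by rw [map_inv₀, hs]
  intro x y h
  induction h with
  | ab =>
      rw [G_mul_ι, G_smul, G_mul_ι, hsi, ← op_smul, op_inj]
      simp only [vals, Matrix.cons_val_zero, Matrix.cons_val_one, Matrix.head_cons]
      rw [smul_mul_assoc, hcd, mul_smul_comm, smul_smul, smul_smul]
      congr 1; ring
  | ac =>
      rw [G_mul_ι, G_smul, G_mul_ι, hsi, ← op_smul, op_inj]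
      simp only [vals, Matrix.cons_val_zero, Matrix.cons_val_one, Matrix.head_cons,
        Matrix.cons_val_two, Matrix.tail_cons]
      rw [smul_mul_assoc, hbd, mul_smul_comm, smul_smul, smul_smul]
      congr 1; ring
  | bd =>
      rw [G_mul_ι, G_smul, G_mul_ι, hsi, ← op_smul, op_inj]
      simp only [vals, Matrix.cons_val_zero, Matrix.cons_val_one, Matrix.head_cons,
        Matrix.cons_val_three, Matrix.tail_cons]
      rw [mul_smul_comm, hac, smul_mul_assoc, smul_smul, smul_smul]
      congr 1; ring
  | cd =>
      rw [G_mul_ι, G_smul, G_mul_ι, hsi, ← op_smul, op_inj]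
      simp only [vals, Matrix.cons_val_zero, Matrix.cons_val_one, Matrix.head_cons,
        Matrix.cons_val_two, Matrix.cons_val_three, Matrix.tail_cons]
      rw [mul_smul_comm, hab, smul_mul_assoc, smul_smul, smul_smul]
      congr 1; ring
  | bc =>
      rw [G_mul_ι, G_mul_ι, op_inj]
      simp only [vals, Matrix.cons_val_one, Matrix.head_cons, Matrix.cons_val_two,
        Matrix.tail_cons, Matrix.cons_val_zero]
      rw [smul_mul_assoc, mul_smul_comm, smul_mul_assoc, mul_smul_comm, hbc,
        smul_smul, smul_smul]
      congr 1; ring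
  | ad =>
      rw [map_sub, G_mul_ι, G_mul_ι, G_smul, G_mul_ι, ← op_sub, ← op_smul, op_inj]
      have hss : starRingEnd ℂ (q⁻¹ - q) = q⁻¹ - q := by rw [map_sub, hsi, hs]
      rw [hss]
      simp only [vals, Matrix.cons_val_zero, Matrix.cons_val_one, Matrix.head_cons,
        Matrix.cons_val_two, Matrix.cons_val_three, Matrix.tail_cons]
      rw [smul_mul_assoc, mul_smul_comm, smul_smul, smul_smul, had]
      congr 1
      field_simp
  | det =>
      rw [map_sub, G_mul_ι, G_smul, G_mul_ι, hsi, ← op_smul, ← op_sub, map_one, ← op_one, op_inj]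
      simp only [vals, Matrix.cons_val_zero, Matrix.cons_val_one, Matrix.head_cons,
        Matrix.cons_val_two, Matrix.cons_val_three, Matrix.tail_cons]
      have hone : q⁻¹ * -q * -q⁻¹ = q⁻¹ := by
        field_simp
      rw [smul_mul_assoc, mul_smul_comm, smul_smul, smul_smul, hone]
      exact hdet q


variable {q}

lemma star_smul'' (z : ℂ) (x : FreeAlgebra ℂ (Fin 4)) : star (z • x) = z • star x := by
  rw [Algebra.smul_def, star_mul, FreeAlgebra.star_algebraMap, ← Algebra.commutes,
    ← Algebra.smul_def]

lemma unCj_smul (z : ℂ) (u : Cj q) :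
    unCj q (z • u) = starRingEnd ℂ z • unCj q u := by
  rw [Algebra.smul_def, map_mul, unCj_algebraMap, ← Algebra.smul_def]

variable (q) (h0 : q ≠ 0) (hs : starRingEnd ℂ q = q)

def stHom : SLq q →+* (SLq q)ᵐᵒᵖ := RingQuot.lift ⟨G q, G_rel q h0 hs⟩

def st : SLq q → SLq q := fun x => unop (stHom q h0 hs x)

variable {q}

lemma st_mk (x : FreeAlgebra ℂ (Fin 4)) :
    st q h0 hs (RingQuot.mkAlgHom ℂ (SLRel q) x) = unCj q (L0 q (star x)) := by
  rw [mkq, st, stHom, RingQuot.lift_mkRingHom_apply, G_apply, unop_op]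

lemma st_gen (i : Fin 4) : st q h0 hs (gen q i) = vals q i := by
  rw [gen, st_mk, FreeAlgebra.star_ι]
  simp [L0]

lemma st_add (x y : SLq q) : st q h0 hs (x + y) = st q h0 hs x + st q h0 hs y := by
  simp [st, map_add]

lemma st_mul (x y : SLq q) : st q h0 hs (x * y) = st q h0 hs y * st q h0 hs x := by
  simp [st, map_mul]

lemma st_one : st q h0 hs 1 = 1 := by simp [st, map_one]

lemma st_smul (z : ℂ) (x : SLq q) :
    st q h0 hs (z • x) = starRingEnd ℂ z • st q h0 hs x := by
  obtain ⟨y, rfl⟩ := RingQuot.mkAlgHom_surjective ℂ (SLRel q) x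
  rw [← map_smul, st_mk, st_mk, star_smul'', map_smul, unCj_smul]

/-- Extensionality from the generators. -/
lemma alg_ext {A : Type*} [Semiring A] [Algebra ℂ A] (f g : SLq q →ₐ[ℂ] A)
    (h : ∀ i, f (gen q i) = g (gen q i)) : f = g := by
  apply RingQuot.ringQuot_ext'
  apply FreeAlgebra.hom_ext
  funext i
  simpa [gen] using h i

/-- If `t1, t2` are conjugate-linear antimultiplicative unital maps and `t1 ∘ t2` fixes
the generators, then `t1 ∘ t2 = id`. -/
lemma comp_eq_id (t1 t2 : SLq q → SLq q)
    (h1a : ∀ x y, t1 (x + y) = t1 x + t1 y)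
    (h1s : ∀ (z : ℂ) x, t1 (z • x) = starRingEnd ℂ z • t1 x)
    (h1m : ∀ x y, t1 (x * y) = t1 y * t1 x) (h1o : t1 1 = 1)
    (h2a : ∀ x y, t2 (x + y) = t2 x + t2 y)
    (h2s : ∀ (z : ℂ) x, t2 (z • x) = starRingEnd ℂ z • t2 x)
    (h2m : ∀ x y, t2 (x * y) = t2 y * t2 x) (h2o : t2 1 = 1)
    (hgen : ∀ i, t1 (t2 (gen q i)) = gen q i) :
    ∀ x, t1 (t2 x) = x := by
  have ht2z : t2 0 = 0 := by simpa using h2s 0 0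
  have ht1z : t1 0 = 0 := by simpa using h1s 0 0
  let E : SLq q →ₐ[ℂ] SLq q :=
  { toFun := fun x => t1 (t2 x)
    map_one' := by show t1 (t2 1) = 1; rw [h2o, h1o]
    map_mul' := fun x y => by
      show t1 (t2 (x * y)) = t1 (t2 x) * t1 (t2 y); rw [h2m, h1m]
    map_zero' := by show t1 (t2 0) = 0; rw [ht2z, ht1z]
    map_add' := fun x y => by
      show t1 (t2 (x + y)) = t1 (t2 x) + t1 (t2 y); rw [h2a, h1a]
    commutes' := fun z => by
      show t1 (t2 (algebraMap ℂ _ z)) = algebraMap ℂ _ z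
      rw [Algebra.algebraMap_eq_smul_one, h2s, h2o, h1s, h1o]
      simp }
  have hE : E = AlgHom.id ℂ (SLq q) := alg_ext E (AlgHom.id ℂ (SLq q)) (fun i => hgen i)
  intro x
  exact AlgHom.congr_fun hE x

lemma st_gen0 : st q h0 hs (gen q 0) = gen q 3 := by rw [st_gen]; simp [vals]
lemma st_gen1 : st q h0 hs (gen q 1) = (-q⁻¹) • gen q 2 := by rw [st_gen]; simp [vals]
lemma st_gen2 : st q h0 hs (gen q 2) = (-q) • gen q 1 := by rw [st_gen]; simp [vals]
lemma st_gen3 : st q h0 hs (gen q 3) = gen q 0 := by rw [st_gen]; simp [vals]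

lemma st_st_gen (i : Fin 4) : st q h0 hs (st q h0 hs (gen q i)) = gen q i := by
  have hsi : starRingEnd ℂ q⁻¹ = q⁻¹ := by rw [map_inv₀, hs]
  have c0 : st q h0 hs (st q h0 hs (gen q 0)) = gen q 0 := by
    rw [st_gen0, st_gen3]
  have c1 : st q h0 hs (st q h0 hs (gen q 1)) = gen q 1 := by
    rw [st_gen1, st_smul, st_gen2, map_neg, hsi, smul_smul,
      show -q⁻¹ * -q = 1 by field_simp, one_smul]
  have c2 : st q h0 hs (st q h0 hs (gen q 2)) = gen q 2 := by
    rw [st_gen2, st_smul, st_gen1, map_neg, hs, smul_smul,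
      show -q * -q⁻¹ = 1 by field_simp, one_smul]
  have c3 : st q h0 hs (st q h0 hs (gen q 3)) = gen q 3 := by
    rw [st_gen3, st_gen0]
  fin_cases i
  · exact c0
  · exact c1
  · exact c2
  · exact c3

lemma st_invol (x : SLq q) : st q h0 hs (st q h0 hs x) = x :=
  comp_eq_id (st q h0 hs) (st q h0 hs) (st_add h0 hs) (st_smul h0 hs) (st_mul h0 hs)
    (st_one h0 hs) (st_add h0 hs) (st_smul h0 hs) (st_mul h0 hs) (st_one h0 hs)
    (st_st_gen h0 hs) x

lemma adjoin_gen_top : Algebra.adjoin ℂ (Set.range (gen q)) = ⊤ := by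
  have h1 : Set.range (gen q)
      = (RingQuot.mkAlgHom ℂ (SLRel q)) '' Set.range (FreeAlgebra.ι ℂ) := by
    rw [← Set.range_comp]; rfl
  rw [h1, ← AlgHom.map_adjoin, FreeAlgebra.adjoin_range_ι, Algebra.map_top]
  rw [AlgHom.range_eq_top]
  exact RingQuot.mkAlgHom_surjective ℂ (SLRel q)

end SU2Aux

set_option maxHeartbeats 1600000 in
/-- For nonzero real `q` there is a unique star structure `★ₑ` on `SL_q(2,ℂ)` with
`a^★ = d`, `b^★ = −q⁻¹ c`, `c^★ = −q b`, `d^★ = a`, and it is a Hopf star structure: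
`Δ(x^★) = (★ ⊗ ★)(Δ(x))` for all `x`.  (The real form `SU_q(2)`.) -/
theorem su2_star_exists_unique (q : ℝ) (hq : q ≠ 0) :
    (∃! st : SLq ((q : ℂ)) → SLq ((q : ℂ)), IsStar st ∧ StarVals ((q : ℂ)) st) ∧
    (∀ st : SLq ((q : ℂ)) → SLq ((q : ℂ)), IsStar st ∧ StarVals ((q : ℂ)) st →
      ∀ Δ : SLq ((q : ℂ)) →ₐ[ℂ] (SLq ((q : ℂ)) ⊗[ℂ] SLq ((q : ℂ))), IsComul ((q : ℂ)) Δ →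
        ∃ T : (SLq ((q : ℂ)) ⊗[ℂ] SLq ((q : ℂ))) → (SLq ((q : ℂ)) ⊗[ℂ] SLq ((q : ℂ))),
          (∀ u v : SLq ((q : ℂ)) ⊗[ℂ] SLq ((q : ℂ)), T (u + v) = T u + T v) ∧
          (∀ x y : SLq ((q : ℂ)), T (x ⊗ₜ[ℂ] y) = st x ⊗ₜ[ℂ] st y) ∧
          (∀ x : SLq ((q : ℂ)), Δ (st x) = T (Δ x))) := by
  have h0 : (q : ℂ) ≠ 0 := Complex.ofReal_ne_zero.mpr hq
  have hs : starRingEnd ℂ ((q : ℂ)) = ((q : ℂ)) := Complex.conj_ofReal q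
  have hsi : starRingEnd ℂ ((q : ℂ))⁻¹ = ((q : ℂ))⁻¹ := by rw [map_inv₀, hs]
  constructor
  · refine ⟨SU2Aux.st ((q : ℂ)) h0 hs,
      ⟨⟨SU2Aux.st_add h0 hs, SU2Aux.st_smul h0 hs, SU2Aux.st_mul h0 hs, SU2Aux.st_one h0 hs,
        SU2Aux.st_invol h0 hs⟩,
       SU2Aux.st_gen0 h0 hs, SU2Aux.st_gen1 h0 hs, SU2Aux.st_gen2 h0 hs,
       SU2Aux.st_gen3 h0 hs⟩, ?_⟩
    rintro st' ⟨⟨ha, hsm, hm, ho, hi⟩, hv0, hv1, hv2, hv3⟩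
    have key : ∀ x, st' (SU2Aux.st ((q : ℂ)) h0 hs x) = x := by
      apply SU2Aux.comp_eq_id _ _ ha hsm hm ho (SU2Aux.st_add h0 hs) (SU2Aux.st_smul h0 hs)
        (SU2Aux.st_mul h0 hs) (SU2Aux.st_one h0 hs)
      intro i
      have c0 : st' (SU2Aux.st ((q : ℂ)) h0 hs (gen _ 0)) = gen _ 0 := by
        rw [SU2Aux.st_gen0, hv3]
      have c1 : st' (SU2Aux.st ((q : ℂ)) h0 hs (gen _ 1)) = gen _ 1 := by
        rw [SU2Aux.st_gen1, hsm, hv2, map_neg, hsi, smul_smul,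
          show -((q : ℂ))⁻¹ * -(q : ℂ) = 1 by field_simp, one_smul]
      have c2 : st' (SU2Aux.st ((q : ℂ)) h0 hs (gen _ 2)) = gen _ 2 := by
        rw [SU2Aux.st_gen2, hsm, hv1, map_neg, hs, smul_smul,
          show -(q : ℂ) * -((q : ℂ))⁻¹ = 1 by field_simp, one_smul]
      have c3 : st' (SU2Aux.st ((q : ℂ)) h0 hs (gen _ 3)) = gen _ 3 := by
        rw [SU2Aux.st_gen3, hv0]
      fin_cases i
      · exact c0
      · exact c1
      · exact c2
      · exact c3
    funext x
    calc st' x = st' (SU2Aux.st ((q : ℂ)) h0 hs (SU2Aux.st ((q : ℂ)) h0 hs x)) := by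
          rw [SU2Aux.st_invol]
      _ = SU2Aux.st ((q : ℂ)) h0 hs x := key _
  · rintro st ⟨⟨ha, hsm, hm, ho, hi⟩, hv0, hv1, hv2, hv3⟩ Δ ⟨hc0, hc1, hc2, hc3⟩
    have h0st : st 0 = 0 := by simpa using hsm 0 0
    let f : SLq ((q : ℂ)) →+ SLq ((q : ℂ)) →+ (SLq ((q : ℂ)) ⊗[ℂ] SLq ((q : ℂ))) :=
    { toFun := fun x =>
      { toFun := fun y => st x ⊗ₜ[ℂ] st y
        map_zero' := by show st x ⊗ₜ[ℂ] st 0 = 0; rw [h0st, TensorProduct.tmul_zero]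
        map_add' := fun y1 y2 => by
          show st x ⊗ₜ[ℂ] st (y1 + y2) = st x ⊗ₜ[ℂ] st y1 + st x ⊗ₜ[ℂ] st y2
          rw [ha, TensorProduct.tmul_add] }
      map_zero' := by
        ext y
        show st 0 ⊗ₜ[ℂ] st y = 0
        rw [h0st, TensorProduct.zero_tmul]
      map_add' := fun x1 x2 => by
        ext y
        show st (x1 + x2) ⊗ₜ[ℂ] st y = st x1 ⊗ₜ[ℂ] st y + st x2 ⊗ₜ[ℂ] st y
        rw [ha, TensorProduct.add_tmul] }
    have hbal : ∀ (z : ℂ) x y, f (z • x) y = f x (z • y) := by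
      intro z x y
      show st (z • x) ⊗ₜ[ℂ] st y = st x ⊗ₜ[ℂ] st (z • y)
      rw [hsm, hsm, TensorProduct.smul_tmul]
    let T := TensorProduct.liftAddHom f hbal
    have hT : ∀ x y : SLq ((q : ℂ)), T (x ⊗ₜ[ℂ] y) = st x ⊗ₜ[ℂ] st y := fun x y =>
      TensorProduct.liftAddHom_tmul f hbal x y
    have hTmul : ∀ u v, T (u * v) = T v * T u := by
      intro u v
      induction u using TensorProduct.induction_on generalizing v with
      | zero => simp
      | tmul x y =>
        induction v using TensorProduct.induction_on with
        | zero => simp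
        | tmul x' y' =>
            rw [Algebra.TensorProduct.tmul_mul_tmul, hT, hT, hT,
              Algebra.TensorProduct.tmul_mul_tmul, hm, hm]
        | add v1 v2 h1 h2 => simp [mul_add, add_mul, map_add, h1, h2]
      | add u1 u2 h1 h2 => simp [mul_add, add_mul, map_add, h1 _, h2 _]
    have hTsmul : ∀ (z : ℂ) u, T (z • u) = starRingEnd ℂ z • T u := by
      intro z u
      induction u using TensorProduct.induction_on with
      | zero => simp
      | tmul x y => rw [TensorProduct.smul_tmul', hT, hT, hsm, TensorProduct.smul_tmul']
      | add u1 u2 h1 h2 => rw [smul_add, map_add, h1, h2, map_add, smul_add]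
    have hT1 : T 1 = 1 := by
      rw [Algebra.TensorProduct.one_def, hT, ho]
    refine ⟨T, fun u v => map_add T u v, hT, ?_⟩
    intro x
    have hx : x ∈ Algebra.adjoin ℂ (Set.range (gen ((q : ℂ)))) := by
      rw [SU2Aux.adjoin_gen_top]; trivial
    induction hx using Algebra.adjoin_induction with
    | mem g hg =>
        obtain ⟨i, rfl⟩ := hg
        have c0 : Δ (st (gen _ 0)) = T (Δ (gen _ 0)) := by
          rw [hv0, hc3, hc0, map_add, hT, hT, hv0, hv1, hv2]
          simp only [← TensorProduct.smul_tmul', TensorProduct.tmul_smul, smul_smul]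
          rw [show -(q : ℂ) * -((q : ℂ))⁻¹ = 1 by field_simp, one_smul, add_comm]
        have c1 : Δ (st (gen _ 1)) = T (Δ (gen _ 1)) := by
          rw [hv1, map_smul, hc2, hc1, map_add, hT, hT, hv0, hv1, hv3]
          simp only [← TensorProduct.smul_tmul', TensorProduct.tmul_smul, smul_add]
          rw [add_comm]
        have c2 : Δ (st (gen _ 2)) = T (Δ (gen _ 2)) := by
          rw [hv2, map_smul, hc1, hc2, map_add, hT, hT, hv0, hv2, hv3]
          simp only [← TensorProduct.smul_tmul', TensorProduct.tmul_smul, smul_add]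
          rw [add_comm]
        have c3 : Δ (st (gen _ 3)) = T (Δ (gen _ 3)) := by
          rw [hv3, hc0, hc3, map_add, hT, hT, hv1, hv2, hv3]
          simp only [← TensorProduct.smul_tmul', TensorProduct.tmul_smul, smul_smul]
          rw [show -((q : ℂ))⁻¹ * -(q : ℂ) = 1 by field_simp, one_smul, add_comm]
        fin_cases i
        · exact c0
        · exact c1
        · exact c2
        · exact c3
    | algebraMap z =>
        have l1 : Δ (st (z • 1)) = starRingEnd ℂ z • 1 := by
          rw [hsm, ho, map_smul, map_one]
        have l2 : T (Δ (z • 1)) = starRingEnd ℂ z • 1 := by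
          rw [map_smul, map_one, hTsmul, hT1]
        rw [Algebra.algebraMap_eq_smul_one, l1, l2]
    | add x y hx hy ihx ihy =>
        rw [ha, map_add, ihx, ihy, map_add, map_add]
    | mul x y hx hy ihx ihy =>
        rw [hm, map_mul, ihx, ihy, map_mul, hTmul]
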